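/- For any vectors l, m ∈ ℤ³ \ {0} with l ≠ ±m, and u_l ∈ l^⊥, u_m ∈ m^⊥ (vectors in ℝ³ orthogonal to l and m respectively), the Fourier coefficient of the projected Navier–Stokes nonlinearity at frequency l+m satisfies B_{l+m}(u_l e_l, u_m e_m) = (1/2)(u_l · m) P_{l+m} u_m, where P_k η = η − (k·η/|k|²) k is the orthogonal projection of ℝ³ onto k^⊥. -/

import Mathlib

open MeasureTheory Real

/-- `ℤ³₊`: the first nonzero coordinate is positive. -/
def Zplus (k : Fin 3 → ℤ) : Prop :=
  0 < k 0 ∨ (k 0 = 0 ∧ 0 < k 1) ∨ (k 0 = 0 ∧ k 1 = 0 ∧ 0 < k 2)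

instance : DecidablePred Zplus := fun k => by unfold Zplus; infer_instance

/-- The Fourier basis functions on the torus `[0,2π]³`:
`e_k(x) = cos(k·x)` for `k ∈ ℤ³₊` and `e_k(x) = sin(k·x)` otherwise. -/
noncomputable def fourierE (k : Fin 3 → ℤ) (x : Fin 3 → ℝ) : ℝ :=
  if Zplus k then Real.cos (∑ i, (k i : ℝ) * x i) else Real.sin (∑ i, (k i : ℝ) * x i)

/-- The fundamental domain `[0,2π]³` of the torus. -/
noncomputable def torusBox : Set (Fin 3 → ℝ) :=
  Set.univ.pi fun _ => Set.Ioc 0 (2 * Real.pi)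

/-- The Fourier coefficient at frequency `k` of a vector field `f` on the torus,
with respect to the (non-normalized) basis `e_k`, i.e. `f = ∑ₖ (coeff k f) e_k`. -/
noncomputable def nsFourierCoeff (k : Fin 3 → ℤ) (f : (Fin 3 → ℝ) → (Fin 3 → ℝ)) :
    Fin 3 → ℝ :=
  (4 * Real.pi ^ 3)⁻¹ • ∫ x in torusBox, fourierE k x • f x

/-- The orthogonal projection `P_k` of `ℝ³` onto `k^⊥`. -/
noncomputable def projPerp (k : Fin 3 → ℤ) (η : Fin 3 → ℝ) : Fin 3 → ℝ :=
  η - ((∑ i, (k i : ℝ) * η i) / (∑ i, (k i : ℝ) ^ 2)) • fun i => (k i : ℝ)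

/-! ### Auxiliary lemmas -/

lemma line_int (k : ℤ) :
    (∫ t in Set.Ioc (0:ℝ) (2*π), Complex.exp ((k:ℂ) * t * Complex.I))
      = if k = 0 then ((2*π:ℝ):ℂ) else 0 := by
  rw [← intervalIntegral.integral_of_le (by positivity : (0:ℝ) ≤ 2*π)]
  by_cases hk : k = 0
  · simp [hk, sub_zero]
  · have hc : (k:ℂ) * Complex.I ≠ 0 :=
      mul_ne_zero (Int.cast_ne_zero.2 hk) Complex.I_ne_zero
    have h1 : ∀ t : ℝ, (k:ℂ) * t * Complex.I = ((k:ℂ) * Complex.I) * t := fun t => by ring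
    simp_rw [h1]
    rw [integral_exp_mul_complex hc]
    have h2 : (k:ℂ) * Complex.I * ((2*π:ℝ):ℂ) = (k:ℤ) * (2 * (π:ℂ) * Complex.I) := by
      push_cast; ring
    rw [h2, Complex.exp_int_mul_two_pi_mul_I]
    simp [hk]

lemma box_exp (k : Fin 3 → ℤ) :
    (∫ x in torusBox, Complex.exp ((∑ i, (k i:ℂ) * x i) * Complex.I))
      = if k = 0 then (((2*π)^3:ℝ):ℂ) else 0 := by
  have hmeas : MeasurableSet torusBox :=
    MeasurableSet.univ_pi fun _ => measurableSet_Ioc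
  rw [← MeasureTheory.integral_indicator hmeas]
  have hind : (torusBox.indicator fun x => Complex.exp ((∑ i, (k i:ℂ) * x i) * Complex.I))
      = fun x => ∏ i, Set.indicator (Set.Ioc (0:ℝ) (2*π))
          (fun t => Complex.exp ((k i:ℂ) * t * Complex.I)) (x i) := by
    funext x
    by_cases hx : x ∈ torusBox
    · rw [Set.indicator_of_mem hx, Finset.sum_mul, Complex.exp_sum]
      refine Finset.prod_congr rfl fun i _ => ?_
      rw [Set.indicator_of_mem (hx i (Set.mem_univ i))]
    · rw [Set.indicator_of_notMem hx]
      obtain ⟨j, hj⟩ : ∃ j, x j ∉ Set.Ioc (0:ℝ) (2*π) := by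
        by_contra h; push_neg at h; exact hx fun i _ => h i
      exact (Finset.prod_eq_zero (Finset.mem_univ j)
        (Set.indicator_of_notMem hj _)).symm
  rw [hind, MeasureTheory.integral_fintype_prod_volume_eq_prod (ι := Fin 3)
    (f := fun i t => Set.indicator (Set.Ioc (0:ℝ) (2*π))
      (fun t => Complex.exp ((k i:ℂ) * t * Complex.I)) t)]
  simp_rw [MeasureTheory.integral_indicator measurableSet_Ioc, line_int]
  by_cases hk : k = 0
  · simp [hk]
  · obtain ⟨j, hj⟩ : ∃ j, k j ≠ 0 := by
      by_contra h; push_neg at h; exact hk (funext h)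
    rw [if_neg hk]
    exact Finset.prod_eq_zero (Finset.mem_univ j) (by simp [hj])

lemma cos_int (k : Fin 3 → ℤ) :
    IntegrableOn (fun x => Real.cos (∑ i, (k i:ℝ) * x i)) torusBox := by
  have hc : Continuous fun x : Fin 3 → ℝ => Real.cos (∑ i, (k i:ℝ) * x i) := by fun_prop
  have : IntegrableOn (fun x => Real.cos (∑ i, (k i:ℝ) * x i))
      (Set.univ.pi fun _ : Fin 3 => Set.Icc (0:ℝ) (2*π)) :=
    hc.continuousOn.integrableOn_compact (isCompact_univ_pi fun _ => isCompact_Icc)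
  exact this.mono_set (Set.pi_mono fun i _ => Set.Ioc_subset_Icc_self)

lemma exp_int (k : Fin 3 → ℤ) :
    IntegrableOn (fun x : Fin 3 → ℝ =>
      Complex.exp ((∑ i, (k i:ℂ) * x i) * Complex.I)) torusBox := by
  have hc : Continuous fun x : Fin 3 → ℝ =>
      Complex.exp ((∑ i, (k i:ℂ) * x i) * Complex.I) := by fun_prop
  have : IntegrableOn _ (Set.univ.pi fun _ : Fin 3 => Set.Icc (0:ℝ) (2*π)) :=
    hc.continuousOn.integrableOn_compact (isCompact_univ_pi fun _ => isCompact_Icc)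
  exact this.mono_set (Set.pi_mono fun i _ => Set.Ioc_subset_Icc_self)

lemma box_cos (k : Fin 3 → ℤ) :
    (∫ x in torusBox, Real.cos (∑ i, (k i:ℝ) * x i))
      = if k = 0 then (2*π)^3 else 0 := by
  have h1 : ∀ x : Fin 3 → ℝ, Real.cos (∑ i, (k i:ℝ) * x i)
      = (Complex.exp ((∑ i, (k i:ℂ) * x i) * Complex.I)).re := by
    intro x
    have : ((∑ i, (k i:ℝ) * x i : ℝ):ℂ) = ∑ i, (k i:ℂ) * x i := by push_cast; rfl
    rw [← this, Complex.exp_ofReal_mul_I_re]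
  simp_rw [h1]
  have h2 := integral_re (μ := volume.restrict torusBox) (exp_int k)
  simp only [RCLike.re_to_complex] at h2
  rw [h2, box_exp]
  by_cases hk : k = 0 <;>
    simp [hk, ← Complex.ofReal_pow, ← Complex.ofReal_ofNat, ← Complex.ofReal_mul]

lemma zplus_ne_zero {k : Fin 3 → ℤ} (h : Zplus k) : k ≠ 0 := by
  rintro rfl
  simp [Zplus] at h

lemma Sadd (k k' : Fin 3 → ℤ) (x : Fin 3 → ℝ) :
    (∑ i, ((k + k') i : ℝ) * x i)
      = (∑ i, (k i : ℝ) * x i) + ∑ i, (k' i : ℝ) * x i := by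
  rw [← Finset.sum_add_distrib]
  refine Finset.sum_congr rfl fun i _ => ?_
  simp only [Pi.add_apply]
  push_cast
  ring

lemma Sneg (k : Fin 3 → ℤ) (x : Fin 3 → ℝ) :
    (∑ i, ((-k) i : ℝ) * x i) = -∑ i, (k i : ℝ) * x i := by
  rw [← Finset.sum_neg_distrib]
  refine Finset.sum_congr rfl fun i _ => ?_
  simp only [Pi.neg_apply]
  push_cast
  ring

lemma Szero (x : Fin 3 → ℝ) : (∑ i, ((0 : Fin 3 → ℤ) i : ℝ) * x i) = 0 := by simp

lemma trig_id (c A B : ℝ) :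
    Real.cos (A + B) * (c * Real.cos A * Real.cos (-B))
      = c/4 * (Real.cos (A + A) + Real.cos ((A + B) + (A + B))
          + Real.cos 0 + Real.cos (B + B)) := by
  simp only [Real.cos_neg, Real.cos_add, Real.sin_add, Real.cos_zero]
  linear_combination (c/4 * (Real.cos B^2 - Real.sin B^2 + 1)) * Real.sin_sq_add_cos_sq A
    + (c/2 * Real.cos A^2) * Real.sin_sq_add_cos_sq B

lemma projPerp_smul (k : Fin 3 → ℤ) (r : ℝ) (η : Fin 3 → ℝ) :
    projPerp k (r • η) = r • projPerp k η := by
  unfold projPerp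
  have hs : (∑ i, (k i:ℝ) * (r • η) i) = r * ∑ i, (k i:ℝ) * η i := by
    simp only [Pi.smul_apply, smul_eq_mul, Finset.mul_sum]
    exact Finset.sum_congr rfl fun j _ => by ring
  rw [hs, smul_sub, smul_smul, mul_div_assoc]

lemma ne_double {k : Fin 3 → ℤ} (h : k ≠ 0) : k + k ≠ (0 : Fin 3 → ℤ) := by
  intro h2
  apply h
  funext i
  have := congrFun h2 i
  simp only [Pi.add_apply, Pi.zero_apply] at this ⊢
  omega

/-- For `l, -m, l+m ∈ ℤ³₊`, `l ≠ ±m`, `u_l ⊥ l`, `u_m ⊥ m`, the Fourier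
coefficient at frequency `l+m` of the Leray-projected advection term
`B(u_l e_l, u_m e_m) = P((u_l e_l · ∇)(u_m e_m))`, whose unprojected integrand is
`(u_l · m) e_l(x) e_{-m}(x) u_m`, equals `½ (u_l · m) P_{l+m} u_m`. -/
theorem nonlinearity_fourier_coefficient
    (l m : Fin 3 → ℤ) (hl : Zplus l) (hm : Zplus (-m)) (hlm : Zplus (l + m))
    (hne : l ≠ m) (hne' : l ≠ -m)
    (ul um : Fin 3 → ℝ)
    (hul : (∑ i, ul i * (l i : ℝ)) = 0) (hum : (∑ i, um i * (m i : ℝ)) = 0) :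
    projPerp (l + m)
        (nsFourierCoeff (l + m)
          (fun x => ((∑ i, ul i * (m i : ℝ)) * fourierE l x * fourierE (-m) x) • um))
      = ((1 / 2) * ∑ i, ul i * (m i : ℝ)) • projPerp (l + m) um := by
  set c := ∑ i, ul i * (m i : ℝ) with hc
  have hl0 : l ≠ 0 := zplus_ne_zero hl
  have hm0 : m ≠ 0 := fun h => zplus_ne_zero hm (by rw [h]; simp)
  have hs0 : l + m ≠ 0 := zplus_ne_zero hlm
  have h2l := ne_double hl0
  have h2m := ne_double hm0
  have h2s := ne_double hs0
  have hfun : ∀ x : Fin 3 → ℝ,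
      fourierE (l + m) x • ((c * fourierE l x * fourierE (-m) x) • um)
        = (c/4 * (Real.cos (∑ i, ((l + l) i : ℝ) * x i)
            + Real.cos (∑ i, (((l + m) + (l + m)) i : ℝ) * x i)
            + Real.cos (∑ i, ((0 : Fin 3 → ℤ) i : ℝ) * x i)
            + Real.cos (∑ i, ((m + m) i : ℝ) * x i))) • um := by
    intro x
    rw [smul_smul]
    congr 1
    rw [fourierE, if_pos hlm, fourierE, if_pos hl, fourierE, if_pos hm,
      Sadd l m, Sadd l l, Sadd (l + m) (l + m), Sadd m m, Sadd l m, Sneg m, Szero]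
    exact trig_id c _ _
  simp only [nsFourierCoeff, hfun]
  rw [integral_smul_const]
  have hg : (∫ x in torusBox, c/4 * (Real.cos (∑ i, ((l + l) i : ℝ) * x i)
      + Real.cos (∑ i, (((l + m) + (l + m)) i : ℝ) * x i)
      + Real.cos (∑ i, ((0 : Fin 3 → ℤ) i : ℝ) * x i)
      + Real.cos (∑ i, ((m + m) i : ℝ) * x i))) = 2 * π^3 * c := by
    have hA : IntegrableOn (fun x : Fin 3 → ℝ =>
        Real.cos (∑ i, ((l + l) i : ℝ) * x i)) torusBox := cos_int _
    have hB : IntegrableOn (fun x : Fin 3 → ℝ =>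
        Real.cos (∑ i, (((l + m) + (l + m)) i : ℝ) * x i)) torusBox := cos_int _
    have hC : IntegrableOn (fun x : Fin 3 → ℝ =>
        Real.cos (∑ i, ((0 : Fin 3 → ℤ) i : ℝ) * x i)) torusBox := cos_int _
    have hD : IntegrableOn (fun x : Fin 3 → ℝ =>
        Real.cos (∑ i, ((m + m) i : ℝ) * x i)) torusBox := cos_int _
    have hAB : IntegrableOn (fun x : Fin 3 → ℝ =>
        Real.cos (∑ i, ((l + l) i : ℝ) * x i)
          + Real.cos (∑ i, (((l + m) + (l + m)) i : ℝ) * x i)) torusBox := hA.add hB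
    have hABC : IntegrableOn (fun x : Fin 3 → ℝ =>
        Real.cos (∑ i, ((l + l) i : ℝ) * x i)
          + Real.cos (∑ i, (((l + m) + (l + m)) i : ℝ) * x i)
          + Real.cos (∑ i, ((0 : Fin 3 → ℤ) i : ℝ) * x i)) torusBox := hAB.add hC
    rw [MeasureTheory.integral_const_mul,
      integral_add hABC hD, integral_add hAB hC, integral_add hA hB,
      box_cos, box_cos, box_cos, box_cos,
      if_neg h2l, if_neg h2s, if_pos rfl, if_neg h2m]
    ring
  rw [hg, smul_smul]
  have hcoef : (4 * π^3)⁻¹ * (2 * π^3 * c) = (1/2) * c := by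
    have hπ : (π : ℝ) ≠ 0 := Real.pi_ne_zero
    field_simp
    ring
  rw [hcoef, projPerp_smul]
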